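/- arXiv:1001.4268 — 2 statements merged into one kernel-verified Lean document; each statement's English description precedes it below -/
import Mathlib

section
/- For all integers d ≥ 2 and p ≥ 2, the staircase with landing E_{1,p,d} is brodable but not strongly brodable. -/
/-- Two vertices of `ℤ²` are adjacent if their Euclidean distance is `1`. -/
def Adj (u v : ℤ × ℤ) : Prop := (u.1 - v.1) ^ 2 + (u.2 - v.2) ^ 2 = 1

/-- The inferior diagonal of the cell `(a, b)`: the unordered pair `{(a,b), (a+1,b+1)}`. -/
def infDiag (c : ℤ × ℤ) : Sym2 (ℤ × ℤ) := s(c, (c.1 + 1, c.2 + 1))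

/-- The superior diagonal of the cell `(a, b)`: the unordered pair `{(a,b+1), (a+1,b)}`. -/
def supDiag (c : ℤ × ℤ) : Sym2 (ℤ × ℤ) := s((c.1, c.2 + 1), (c.1 + 1, c.2))

/-- The unordered pair underlying an ordered pair of vertices. -/
def diagOf (e : (ℤ × ℤ) × (ℤ × ℤ)) : Sym2 (ℤ × ℤ) := s(e.1, e.2)

/-- `d 0, d 1, …, d (2n - 1)` (with `n = C.card`) is an embroidery of the
configuration `C`. -/
def IsEmbroidery (C : Finset (ℤ × ℤ)) (d : ℕ → (ℤ × ℤ) × (ℤ × ℤ)) : Prop :=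
  (∀ i < 2 * C.card, ∃ c ∈ C, diagOf (d i) = infDiag c ∨ diagOf (d i) = supDiag c) ∧
  (∀ c ∈ C, ∃! i, i < 2 * C.card ∧ diagOf (d i) = infDiag c) ∧
  (∀ c ∈ C, ∃! i, i < 2 * C.card ∧ diagOf (d i) = supDiag c) ∧
  (∀ c ∈ C, ∀ i j, i < 2 * C.card → j < 2 * C.card →
    diagOf (d i) = infDiag c → diagOf (d j) = supDiag c → i < j) ∧
  (∀ i, i + 1 < 2 * C.card → Adj (d i).2 (d (i + 1)).1)

/-- A closed embroidery: moreover the end of the last diagonal is adjacent to the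
start of the first one. -/
def IsClosedEmbroidery (C : Finset (ℤ × ℤ)) (d : ℕ → (ℤ × ℤ) × (ℤ × ℤ)) : Prop :=
  IsEmbroidery C d ∧ Adj (d (2 * C.card - 1)).2 (d 0).1

/-- A configuration is brodable if it admits an embroidery. -/
def Brodable (C : Finset (ℤ × ℤ)) : Prop := ∃ d, IsEmbroidery C d

/-- A configuration is strongly brodable if it admits a closed embroidery. -/
def StronglyBrodable (C : Finset (ℤ × ℤ)) : Prop := ∃ d, IsClosedEmbroidery C d

/-- The staircase with landing `E_{g,p,d}`:
`{(i, −i) : 0 ≤ i ≤ g−1} ∪ {(g−1+j, −g) : 1 ≤ j ≤ p} ∪ {(g+p+k−1, −g−k) : 1 ≤ k ≤ d}`. -/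
def stairLanding (g p d : ℕ) : Finset (ℤ × ℤ) :=
  (Finset.range g).image (fun i : ℕ => ((i : ℤ), -(i : ℤ))) ∪
  (Finset.range p).image (fun j : ℕ => ((g : ℤ) + j, -(g : ℤ))) ∪
  (Finset.range d).image (fun k : ℕ => ((g : ℤ) + p + k, -(g : ℤ) - 1 - k))

-- ## Auxiliary infrastructure

lemma adj_cases {u v : ℤ × ℤ} (h : Adj u v) :
    (v.1 = u.1 + 1 ∧ v.2 = u.2) ∨ (v.1 = u.1 - 1 ∧ v.2 = u.2) ∨
    (v.1 = u.1 ∧ v.2 = u.2 + 1) ∨ (v.1 = u.1 ∧ v.2 = u.2 - 1) := by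
  obtain ⟨u1, u2⟩ := u; obtain ⟨v1, v2⟩ := v
  unfold Adj at h
  simp only at h ⊢
  have h1 : u1 - v1 ≤ 1 := by nlinarith [sq_nonneg (u2 - v2), sq_nonneg (u1 - v1 - 1)]
  have h2 : -1 ≤ u1 - v1 := by nlinarith [sq_nonneg (u2 - v2), sq_nonneg (u1 - v1 + 1)]
  have h3 : u2 - v2 ≤ 1 := by nlinarith [sq_nonneg (u1 - v1), sq_nonneg (u2 - v2 - 1)]
  have h4 : -1 ≤ u2 - v2 := by nlinarith [sq_nonneg (u1 - v1), sq_nonneg (u2 - v2 + 1)]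
  have h5 : u1 - v1 = -1 ∨ u1 - v1 = 0 ∨ u1 - v1 = 1 := by omega
  have h6 : u2 - v2 = -1 ∨ u2 - v2 = 0 ∨ u2 - v2 = 1 := by omega
  rcases h5 with h5 | h5 | h5 <;> rcases h6 with h6 | h6 | h6 <;>
    rw [h5, h6] at h <;> norm_num at h <;> omega

lemma adj_of {u v : ℤ × ℤ}
    (h : (u.1 - v.1 = 0 ∧ (u.2 - v.2 = 1 ∨ u.2 - v.2 = -1)) ∨
         (u.2 - v.2 = 0 ∧ (u.1 - v.1 = 1 ∨ u.1 - v.1 = -1))) : Adj u v := by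
  unfold Adj
  rcases h with ⟨h1, h2 | h2⟩ | ⟨h1, h2 | h2⟩ <;> rw [h1, h2] <;> norm_num

lemma adj_symm {u v : ℤ × ℤ} (h : Adj u v) : Adj v u := by
  unfold Adj at h ⊢; linear_combination h

lemma infDiag_inj {a b : ℤ × ℤ} (h : infDiag a = infDiag b) : a = b := by
  obtain ⟨a1, a2⟩ := a; obtain ⟨b1, b2⟩ := b
  simp [infDiag, Sym2.eq_iff, Prod.ext_iff] at h ⊢
  omega

lemma supDiag_inj {a b : ℤ × ℤ} (h : supDiag a = supDiag b) : a = b := by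
  obtain ⟨a1, a2⟩ := a; obtain ⟨b1, b2⟩ := b
  simp [supDiag, Sym2.eq_iff, Prod.ext_iff] at h ⊢
  omega

lemma infDiag_ne_supDiag {a b : ℤ × ℤ} (h : infDiag a = supDiag b) : False := by
  obtain ⟨a1, a2⟩ := a; obtain ⟨b1, b2⟩ := b
  simp [infDiag, supDiag, Sym2.eq_iff, Prod.ext_iff] at h
  omega

lemma mem_stair {p d : ℕ} {c : ℤ × ℤ} :
    c ∈ stairLanding 1 p d ↔
      c = (0, 0) ∨ (∃ j : ℕ, j < p ∧ c = (1 + (j : ℤ), -1)) ∨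
        (∃ k : ℕ, k < d ∧ c = (1 + (p : ℤ) + k, -2 - (k : ℤ))) := by
  obtain ⟨c1, c2⟩ := c
  simp only [stairLanding, Finset.mem_union, Finset.mem_image, Finset.mem_range,
    Prod.ext_iff, Nat.cast_one]
  constructor
  · rintro ((⟨i, hi, h1, h2⟩ | ⟨j, hj, h1, h2⟩) | ⟨k, hk, h1, h2⟩)
    · interval_cases i
      · left; simp only [Nat.cast_zero, neg_zero] at h1 h2; exact ⟨h1.symm, h2.symm⟩
    · right; left; exact ⟨j, hj, by omega, by omega⟩
    · right; right; exact ⟨k, hk, by omega, by omega⟩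
  · rintro (⟨h1, h2⟩ | ⟨j, hj, h1, h2⟩ | ⟨k, hk, h1, h2⟩)
    · left; left; exact ⟨0, by omega, by simp [h1], by simp [h2]⟩
    · left; right; exact ⟨j, hj, by omega, by omega⟩
    · right; exact ⟨k, hk, by omega, by omega⟩

lemma card_stair (p d : ℕ) : (stairLanding 1 p d).card = 1 + p + d := by
  have hinj1 : Function.Injective (fun i : ℕ => ((i : ℤ), -(i : ℤ))) := by
    intro a b h; simp [Prod.ext_iff] at h; omega
  have hinj2 : Function.Injective (fun j : ℕ => (((1:ℕ) : ℤ) + j, -((1:ℕ) : ℤ))) := by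
    intro a b h; simp [Prod.ext_iff] at h; omega
  have hinj3 : Function.Injective
      (fun k : ℕ => (((1:ℕ) : ℤ) + p + k, -((1:ℕ) : ℤ) - 1 - k)) := by
    intro a b h; simp [Prod.ext_iff] at h; omega
  have hd1 : Disjoint ((Finset.range 1).image (fun i : ℕ => ((i : ℤ), -(i : ℤ))))
      ((Finset.range p).image (fun j : ℕ => (((1:ℕ) : ℤ) + j, -((1:ℕ) : ℤ)))) := by
    rw [Finset.disjoint_left]
    intro a h1 h2
    simp only [Finset.mem_image, Finset.mem_range] at h1 h2
    obtain ⟨i, hi, h1⟩ := h1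
    obtain ⟨j, hj, h2⟩ := h2
    interval_cases i
    rw [← h1] at h2
    simp [Prod.ext_iff] at h2
  have hd2 : Disjoint (((Finset.range 1).image (fun i : ℕ => ((i : ℤ), -(i : ℤ)))) ∪
      ((Finset.range p).image (fun j : ℕ => (((1:ℕ) : ℤ) + j, -((1:ℕ) : ℤ)))))
      ((Finset.range d).image (fun k : ℕ => (((1:ℕ) : ℤ) + p + k, -((1:ℕ) : ℤ) - 1 - k))) := by
    rw [Finset.disjoint_left]
    intro a h1 h2
    simp only [Finset.mem_union, Finset.mem_image, Finset.mem_range] at h1 h2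
    obtain ⟨k, hk, h2⟩ := h2
    rcases h1 with ⟨i, hi, h1⟩ | ⟨j, hj, h1⟩
    · interval_cases i
      rw [← h1] at h2
      simp [Prod.ext_iff] at h2
      omega
    · rw [← h1] at h2
      simp [Prod.ext_iff] at h2
      omega
  rw [stairLanding]
  rw [Finset.card_union_of_disjoint hd2, Finset.card_union_of_disjoint hd1]
  rw [Finset.card_image_of_injective _ hinj1, Finset.card_image_of_injective _ hinj2,
    Finset.card_image_of_injective _ hinj3]
  simp

lemma mem_stair_lin {p d : ℕ} {y1 y2 : ℤ} (hy : (y1, y2) ∈ stairLanding 1 p d) :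
    (y1 = 0 ∧ y2 = 0) ∨ (y2 = -1 ∧ 1 ≤ y1 ∧ y1 ≤ (p:ℤ)) ∨
      (y1 + y2 = (p:ℤ) - 1 ∧ (p:ℤ) + 1 ≤ y1 ∧ y1 ≤ (p:ℤ) + (d:ℤ)) := by
  rcases mem_stair.mp hy with h | ⟨j, hj, h⟩ | ⟨k, hk, h⟩ <;>
    simp only [Prod.mk.injEq] at h <;> omega

def emb (p d : ℕ) (i : ℕ) : (ℤ × ℤ) × (ℤ × ℤ) :=
  if i < 2*d then
    (if i % 2 = 0 then
      (((p:ℤ) + ((d - i/2 : ℕ) : ℤ) + 1, -((d - i/2 : ℕ) : ℤ)),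
       ((p:ℤ) + ((d - i/2 : ℕ) : ℤ), -1 - ((d - i/2 : ℕ) : ℤ)))
    else
      (((p:ℤ) + ((d - i/2 : ℕ) : ℤ) + 1, -1 - ((d - i/2 : ℕ) : ℤ)),
       ((p:ℤ) + ((d - i/2 : ℕ) : ℤ), -((d - i/2 : ℕ) : ℤ))))
  else if i < 2*d + p then
    ((((p - (i - 2*d) : ℕ) : ℤ) + 1, 0), (((p - (i - 2*d) : ℕ) : ℤ), -1))
  else if i = 2*d + p then ((2, -1), (1, 0))
  else if i = 2*d + p + 1 then ((0, 0), (1, 1))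
  else if i = 2*d + p + 2 then ((0, 1), (1, 0))
  else ((((i - (2*d + p + 1) : ℕ) : ℤ), 0), (((i - (2*d + p + 1) : ℕ) : ℤ) + 1, -1))

section evals
variable {p d i : ℕ}

lemma emb_eval_tail_even (h1 : i < 2*d) (h2 : i % 2 = 0) :
    emb p d i = (((p:ℤ) + ((d - i/2 : ℕ) : ℤ) + 1, -((d - i/2 : ℕ) : ℤ)),
       ((p:ℤ) + ((d - i/2 : ℕ) : ℤ), -1 - ((d - i/2 : ℕ) : ℤ))) := by
  simp only [emb]; rw [if_pos h1, if_pos h2]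

lemma emb_eval_tail_odd (h1 : i < 2*d) (h2 : i % 2 = 1) :
    emb p d i = (((p:ℤ) + ((d - i/2 : ℕ) : ℤ) + 1, -1 - ((d - i/2 : ℕ) : ℤ)),
       ((p:ℤ) + ((d - i/2 : ℕ) : ℤ), -((d - i/2 : ℕ) : ℤ))) := by
  simp only [emb]; rw [if_pos h1, if_neg (by omega)]

lemma emb_eval_rowinf (h1 : 2*d ≤ i) (h2 : i < 2*d + p) :
    emb p d i = ((((p - (i - 2*d) : ℕ) : ℤ) + 1, 0), (((p - (i - 2*d) : ℕ) : ℤ), -1)) := by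
  simp only [emb]; rw [if_neg (by omega), if_pos h2]

lemma emb_eval_s1 : emb p d (2*d + p) = ((2, -1), (1, 0)) := by
  simp only [emb]; rw [if_neg (by omega), if_neg (by omega)]; simp

lemma emb_eval_I : emb p d (2*d + p + 1) = ((0, 0), (1, 1)) := by
  simp only [emb]; rw [if_neg (by omega), if_neg (by omega), if_neg (by omega)]; simp

lemma emb_eval_S : emb p d (2*d + p + 2) = ((0, 1), (1, 0)) := by
  simp only [emb]
  rw [if_neg (by omega), if_neg (by omega), if_neg (by omega), if_neg (by omega)]; simp

lemma emb_eval_rowsup (h1 : 2*d + p + 3 ≤ i) :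
    emb p d i = ((((i - (2*d + p + 1) : ℕ) : ℤ), 0),
      (((i - (2*d + p + 1) : ℕ) : ℤ) + 1, -1)) := by
  simp only [emb]
  rw [if_neg (by omega), if_neg (by omega), if_neg (by omega), if_neg (by omega),
    if_neg (by omega)]

end evals

lemma emb_class (p d : ℕ) (i : ℕ) (hi : i < 2*(1+p+d)) :
    (∃ k, 1 ≤ k ∧ k ≤ d ∧ i = 2*(d-k) ∧
      diagOf (emb p d i) = infDiag ((p:ℤ)+(k:ℤ), -1-(k:ℤ))) ∨
    (∃ k, 1 ≤ k ∧ k ≤ d ∧ i = 2*(d-k)+1 ∧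
      diagOf (emb p d i) = supDiag ((p:ℤ)+(k:ℤ), -1-(k:ℤ))) ∨
    (∃ k, 1 ≤ k ∧ k ≤ p ∧ i = 2*d+(p-k) ∧
      diagOf (emb p d i) = infDiag ((k:ℤ), -1)) ∨
    (i = 2*d+p ∧ diagOf (emb p d i) = supDiag (1, -1)) ∨
    (∃ k, 2 ≤ k ∧ k ≤ p ∧ i = 2*d+p+1+k ∧
      diagOf (emb p d i) = supDiag ((k:ℤ), -1)) ∨
    (i = 2*d+p+1 ∧ diagOf (emb p d i) = infDiag (0, 0)) ∨
    (i = 2*d+p+2 ∧ diagOf (emb p d i) = supDiag (0, 0)) := by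
  rcases lt_or_ge i (2*d) with h1 | h1
  · rcases Nat.mod_two_eq_zero_or_one i with h2' | h2'
    · refine Or.inl ⟨d - i/2, by omega, by omega, by omega, ?_⟩
      rw [emb_eval_tail_even h1 h2', diagOf, infDiag]
      rw [Sym2.eq_iff]
      simp [Prod.mk.injEq] <;> omega
    · refine Or.inr (Or.inl ⟨d - i/2, by omega, by omega, by omega, ?_⟩)
      rw [emb_eval_tail_odd h1 h2', diagOf, supDiag]
      rw [Sym2.eq_iff]
      simp [Prod.mk.injEq] <;> omega
  · rcases lt_or_ge i (2*d+p) with h2 | h2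
    · refine Or.inr (Or.inr (Or.inl ⟨p - (i - 2*d), by omega, by omega, by omega, ?_⟩))
      rw [emb_eval_rowinf h1 h2, diagOf, infDiag]
      rw [Sym2.eq_iff]
      simp [Prod.mk.injEq] <;> omega
    · rcases (by omega : i = 2*d+p ∨ i = 2*d+p+1 ∨ i = 2*d+p+2 ∨ 2*d+p+3 ≤ i) with h3|h3|h3|h3
      · subst h3
        refine Or.inr (Or.inr (Or.inr (Or.inl ⟨rfl, ?_⟩)))
        rw [emb_eval_s1, diagOf, supDiag]
        rw [Sym2.eq_iff]
        simp [Prod.mk.injEq] <;> omega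
      · subst h3
        refine Or.inr (Or.inr (Or.inr (Or.inr (Or.inr (Or.inl ⟨rfl, ?_⟩)))))
        rw [emb_eval_I, diagOf, infDiag]
        rw [Sym2.eq_iff]
        simp [Prod.mk.injEq] <;> omega
      · subst h3
        refine Or.inr (Or.inr (Or.inr (Or.inr (Or.inr (Or.inr ⟨rfl, ?_⟩)))))
        rw [emb_eval_S, diagOf, supDiag]
        rw [Sym2.eq_iff]
        simp [Prod.mk.injEq] <;> omega
      · refine Or.inr (Or.inr (Or.inr (Or.inr (Or.inl
          ⟨i - (2*d+p+1), by omega, by omega, by omega, ?_⟩))))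
        rw [emb_eval_rowsup h3, diagOf, supDiag]
        rw [Sym2.eq_iff]
        simp [Prod.mk.injEq] <;> omega

section posns
variable {p d i : ℕ}

lemma inf_pos_corner (hi : i < 2*(1+p+d))
    (h : diagOf (emb p d i) = infDiag (0, 0)) : i = 2*d+p+1 := by
  rcases emb_class p d i hi with ⟨k,h1,h2,h3,h4⟩|⟨k,h1,h2,h3,h4⟩|⟨k,h1,h2,h3,h4⟩|
    ⟨h3,h4⟩|⟨k,h1,h2,h3,h4⟩|⟨h3,h4⟩|⟨h3,h4⟩
  · have h5 := infDiag_inj (h4.symm.trans h); simp [Prod.ext_iff] at h5 <;> omega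
  · exact (infDiag_ne_supDiag (h.symm.trans h4)).elim
  · have h5 := infDiag_inj (h4.symm.trans h); simp [Prod.ext_iff] at h5 <;> omega
  · exact (infDiag_ne_supDiag (h.symm.trans h4)).elim
  · exact (infDiag_ne_supDiag (h.symm.trans h4)).elim
  · exact h3
  · exact (infDiag_ne_supDiag (h.symm.trans h4)).elim

lemma sup_pos_corner (hi : i < 2*(1+p+d))
    (h : diagOf (emb p d i) = supDiag (0, 0)) : i = 2*d+p+2 := by
  rcases emb_class p d i hi with ⟨k,h1,h2,h3,h4⟩|⟨k,h1,h2,h3,h4⟩|⟨k,h1,h2,h3,h4⟩|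
    ⟨h3,h4⟩|⟨k,h1,h2,h3,h4⟩|⟨h3,h4⟩|⟨h3,h4⟩
  · exact (infDiag_ne_supDiag (h4.symm.trans h)).elim
  · have h5 := supDiag_inj (h4.symm.trans h); simp [Prod.ext_iff] at h5 <;> omega
  · exact (infDiag_ne_supDiag (h4.symm.trans h)).elim
  · have h5 := supDiag_inj (h4.symm.trans h); simp [Prod.ext_iff] at h5 <;> omega
  · have h5 := supDiag_inj (h4.symm.trans h); simp [Prod.ext_iff] at h5 <;> omega
  · exact (infDiag_ne_supDiag (h4.symm.trans h)).elim
  · exact h3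

lemma inf_pos_row {j : ℕ} (hi : i < 2*(1+p+d)) (hj : j < p)
    (h : diagOf (emb p d i) = infDiag (1 + (j:ℤ), -1)) : i = 2*d+(p-(j+1)) := by
  rcases emb_class p d i hi with ⟨k,h1,h2,h3,h4⟩|⟨k,h1,h2,h3,h4⟩|⟨k,h1,h2,h3,h4⟩|
    ⟨h3,h4⟩|⟨k,h1,h2,h3,h4⟩|⟨h3,h4⟩|⟨h3,h4⟩
  · have h5 := infDiag_inj (h4.symm.trans h); simp [Prod.ext_iff] at h5 <;> omega
  · exact (infDiag_ne_supDiag (h.symm.trans h4)).elim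
  · have h5 := infDiag_inj (h4.symm.trans h); simp [Prod.ext_iff] at h5 <;> omega
  · exact (infDiag_ne_supDiag (h.symm.trans h4)).elim
  · exact (infDiag_ne_supDiag (h.symm.trans h4)).elim
  · have h5 := infDiag_inj (h4.symm.trans h); simp [Prod.ext_iff] at h5 <;> omega
  · exact (infDiag_ne_supDiag (h.symm.trans h4)).elim

lemma sup_pos_row {j : ℕ} (hi : i < 2*(1+p+d)) (hj : j < p)
    (h : diagOf (emb p d i) = supDiag (1 + (j:ℤ), -1)) :
    (j = 0 ∧ i = 2*d+p) ∨ (1 ≤ j ∧ i = 2*d+p+2+j) := by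
  rcases emb_class p d i hi with ⟨k,h1,h2,h3,h4⟩|⟨k,h1,h2,h3,h4⟩|⟨k,h1,h2,h3,h4⟩|
    ⟨h3,h4⟩|⟨k,h1,h2,h3,h4⟩|⟨h3,h4⟩|⟨h3,h4⟩
  · exact (infDiag_ne_supDiag (h4.symm.trans h)).elim
  · have h5 := supDiag_inj (h4.symm.trans h); simp [Prod.ext_iff] at h5 <;> omega
  · exact (infDiag_ne_supDiag (h4.symm.trans h)).elim
  · have h5 := supDiag_inj (h4.symm.trans h); simp [Prod.ext_iff] at h5 <;> omega
  · have h5 := supDiag_inj (h4.symm.trans h); simp [Prod.ext_iff] at h5 <;> omega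
  · exact (infDiag_ne_supDiag (h4.symm.trans h)).elim
  · have h5 := supDiag_inj (h4.symm.trans h); simp [Prod.ext_iff] at h5 <;> omega

lemma inf_pos_tail {k0 : ℕ} (hi : i < 2*(1+p+d)) (hk : k0 < d)
    (h : diagOf (emb p d i) = infDiag (1 + (p:ℤ) + k0, -2 - (k0:ℤ))) :
    i = 2*(d-(k0+1)) := by
  rcases emb_class p d i hi with ⟨k,h1,h2,h3,h4⟩|⟨k,h1,h2,h3,h4⟩|⟨k,h1,h2,h3,h4⟩|
    ⟨h3,h4⟩|⟨k,h1,h2,h3,h4⟩|⟨h3,h4⟩|⟨h3,h4⟩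
  · have h5 := infDiag_inj (h4.symm.trans h); simp [Prod.ext_iff] at h5 <;> omega
  · exact (infDiag_ne_supDiag (h.symm.trans h4)).elim
  · have h5 := infDiag_inj (h4.symm.trans h); simp [Prod.ext_iff] at h5 <;> omega
  · exact (infDiag_ne_supDiag (h.symm.trans h4)).elim
  · exact (infDiag_ne_supDiag (h.symm.trans h4)).elim
  · have h5 := infDiag_inj (h4.symm.trans h); simp [Prod.ext_iff] at h5 <;> omega
  · exact (infDiag_ne_supDiag (h.symm.trans h4)).elim

lemma sup_pos_tail {k0 : ℕ} (hi : i < 2*(1+p+d)) (hk : k0 < d)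
    (h : diagOf (emb p d i) = supDiag (1 + (p:ℤ) + k0, -2 - (k0:ℤ))) :
    i = 2*(d-(k0+1))+1 := by
  rcases emb_class p d i hi with ⟨k,h1,h2,h3,h4⟩|⟨k,h1,h2,h3,h4⟩|⟨k,h1,h2,h3,h4⟩|
    ⟨h3,h4⟩|⟨k,h1,h2,h3,h4⟩|⟨h3,h4⟩|⟨h3,h4⟩
  · exact (infDiag_ne_supDiag (h4.symm.trans h)).elim
  · have h5 := supDiag_inj (h4.symm.trans h); simp [Prod.ext_iff] at h5 <;> omega
  · exact (infDiag_ne_supDiag (h4.symm.trans h)).elim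
  · have h5 := supDiag_inj (h4.symm.trans h); simp [Prod.ext_iff] at h5 <;> omega
  · have h5 := supDiag_inj (h4.symm.trans h); simp [Prod.ext_iff] at h5 <;> omega
  · exact (infDiag_ne_supDiag (h4.symm.trans h)).elim
  · have h5 := supDiag_inj (h4.symm.trans h); simp [Prod.ext_iff] at h5 <;> omega

end posns

lemma emb_adj (p d : ℕ) (hp : 2 ≤ p) (hd : 2 ≤ d) (i : ℕ)
    (hi : i + 1 < 2*(1+p+d)) : Adj (emb p d i).2 (emb p d (i+1)).1 := by
  rcases (by omega : (i < 2*d - 1 ∧ i % 2 = 0) ∨ (i < 2*d - 1 ∧ i % 2 = 1) ∨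
      i = 2*d - 1 ∨ (2*d ≤ i ∧ i < 2*d+p-1) ∨ i = 2*d+p-1 ∨ i = 2*d+p ∨
      i = 2*d+p+1 ∨ i = 2*d+p+2 ∨ 2*d+p+3 ≤ i) with
    ⟨h1,h2⟩|⟨h1,h2⟩|h1|⟨h1,h2⟩|h1|h1|h1|h1|h1
  · have e1 := emb_eval_tail_even (p := p) (show i < 2*d by omega) h2
    have e2 := emb_eval_tail_odd (p := p) (show i+1 < 2*d by omega) (show (i+1)%2 = 1 by omega)
    rw [e1, e2]; apply adj_of; simp <;> omega
  · have e1 := emb_eval_tail_odd (p := p) (show i < 2*d by omega) h2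
    have e2 := emb_eval_tail_even (p := p) (show i+1 < 2*d by omega) (show (i+1)%2 = 0 by omega)
    rw [e1, e2]; apply adj_of; simp <;> omega
  · have e1 := emb_eval_tail_odd (p := p) (show i < 2*d by omega) (show i % 2 = 1 by omega)
    have e2 := emb_eval_rowinf (show 2*d ≤ i+1 by omega) (show i+1 < 2*d+p by omega)
    rw [e1, e2]; apply adj_of; simp <;> omega
  · have e1 := emb_eval_rowinf (show 2*d ≤ i by omega) (show i < 2*d+p by omega)
    have e2 := emb_eval_rowinf (show 2*d ≤ i+1 by omega) (show i+1 < 2*d+p by omega)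
    rw [e1, e2]; apply adj_of; simp <;> omega
  · have e1 := emb_eval_rowinf (show 2*d ≤ i by omega) (show i < 2*d+p by omega)
    have e2 : emb p d (i+1) = ((2, -1), (1, 0)) := by
      rw [show i+1 = 2*d+p by omega]; exact emb_eval_s1
    rw [e1, e2]; apply adj_of; simp
    omega
  · have e1 : emb p d i = ((2, -1), (1, 0)) := by rw [h1]; exact emb_eval_s1
    have e2 : emb p d (i+1) = ((0, 0), (1, 1)) := by
      rw [show i+1 = 2*d+p+1 by omega]; exact emb_eval_I
    rw [e1, e2]; apply adj_of; simp
  · have e1 : emb p d i = ((0, 0), (1, 1)) := by rw [h1]; exact emb_eval_I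
    have e2 : emb p d (i+1) = ((0, 1), (1, 0)) := by
      rw [show i+1 = 2*d+p+2 by omega]; exact emb_eval_S
    rw [e1, e2]; apply adj_of; simp
  · have e1 : emb p d i = ((0, 1), (1, 0)) := by rw [h1]; exact emb_eval_S
    have e2 := emb_eval_rowsup (p := p) (d := d) (show 2*d+p+3 ≤ i+1 by omega)
    rw [e1, e2]; apply adj_of; simp
    omega
  · have e1 := emb_eval_rowsup (p := p) (d := d) (show 2*d+p+3 ≤ i by omega)
    have e2 := emb_eval_rowsup (p := p) (d := d) (show 2*d+p+3 ≤ i+1 by omega)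
    rw [e1, e2]; apply adj_of; simp <;> omega

lemma emb_isEmbroidery (p d : ℕ) (hp : 2 ≤ p) (hd : 2 ≤ d) :
    IsEmbroidery (stairLanding 1 p d) (emb p d) := by
  have hcard := card_stair p d
  unfold IsEmbroidery
  rw [hcard]
  refine ⟨?_, ?_, ?_, ?_, ?_⟩
  · -- each position is a diagonal of a cell
    intro i hi
    rcases emb_class p d i hi with ⟨k,h1,h2,h3,h4⟩|⟨k,h1,h2,h3,h4⟩|⟨k,h1,h2,h3,h4⟩|
      ⟨h3,h4⟩|⟨k,h1,h2,h3,h4⟩|⟨h3,h4⟩|⟨h3,h4⟩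
    · exact ⟨((p:ℤ)+(k:ℤ), -1-(k:ℤ)), mem_stair.mpr (Or.inr (Or.inr
        ⟨k-1, by omega, by simp [Prod.ext_iff] <;> omega⟩)), Or.inl h4⟩
    · exact ⟨((p:ℤ)+(k:ℤ), -1-(k:ℤ)), mem_stair.mpr (Or.inr (Or.inr
        ⟨k-1, by omega, by simp [Prod.ext_iff] <;> omega⟩)), Or.inr h4⟩
    · exact ⟨((k:ℤ), -1), mem_stair.mpr (Or.inr (Or.inl
        ⟨k-1, by omega, by simp [Prod.ext_iff] <;> omega⟩)), Or.inl h4⟩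
    · exact ⟨(1, -1), mem_stair.mpr (Or.inr (Or.inl
        ⟨0, by omega, by norm_num⟩)), Or.inr h4⟩
    · exact ⟨((k:ℤ), -1), mem_stair.mpr (Or.inr (Or.inl
        ⟨k-1, by omega, by simp [Prod.ext_iff] <;> omega⟩)), Or.inr h4⟩
    · exact ⟨(0, 0), mem_stair.mpr (Or.inl rfl), Or.inl h4⟩
    · exact ⟨(0, 0), mem_stair.mpr (Or.inl rfl), Or.inr h4⟩
  · -- unique inf position
    intro c hc
    rcases mem_stair.mp hc with rfl | ⟨j, hj, rfl⟩ | ⟨k0, hk0, rfl⟩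
    · refine ⟨2*d+p+1, ⟨by omega, ?_⟩, fun y hy => inf_pos_corner hy.1 hy.2⟩
      rw [emb_eval_I, diagOf, infDiag]
      rw [Sym2.eq_iff]; norm_num
    · refine ⟨2*d+(p-(j+1)), ⟨by omega, ?_⟩, fun y hy => inf_pos_row hy.1 hj hy.2⟩
      rw [emb_eval_rowinf (by omega) (by omega), diagOf, infDiag]
      rw [Sym2.eq_iff]; simp [Prod.mk.injEq] <;> omega
    · refine ⟨2*(d-(k0+1)), ⟨by omega, ?_⟩, fun y hy => inf_pos_tail hy.1 hk0 hy.2⟩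
      rw [emb_eval_tail_even (by omega) (by omega), diagOf, infDiag]
      rw [Sym2.eq_iff]; simp [Prod.mk.injEq] <;> omega
  · -- unique sup position
    intro c hc
    rcases mem_stair.mp hc with rfl | ⟨j, hj, rfl⟩ | ⟨k0, hk0, rfl⟩
    · refine ⟨2*d+p+2, ⟨by omega, ?_⟩, fun y hy => sup_pos_corner hy.1 hy.2⟩
      rw [emb_eval_S, diagOf, supDiag]
      rw [Sym2.eq_iff]; norm_num
    · rcases Nat.eq_zero_or_pos j with rfl | hj1
      · refine ⟨2*d+p, ⟨by omega, ?_⟩, fun y hy => ?_⟩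
        · rw [emb_eval_s1, diagOf, supDiag]
          rw [Sym2.eq_iff]; simp [Prod.mk.injEq] <;> omega
        · rcases sup_pos_row hy.1 hj hy.2 with ⟨_, h⟩ | ⟨h0, h⟩ <;> omega
      · refine ⟨2*d+p+2+j, ⟨by omega, ?_⟩, fun y hy => ?_⟩
        · rw [emb_eval_rowsup (by omega), diagOf, supDiag]
          rw [Sym2.eq_iff]; simp [Prod.mk.injEq] <;> omega
        · rcases sup_pos_row hy.1 hj hy.2 with ⟨h0, h⟩ | ⟨_, h⟩ <;> omega
    · refine ⟨2*(d-(k0+1))+1, ⟨by omega, ?_⟩, fun y hy => sup_pos_tail hy.1 hk0 hy.2⟩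
      rw [emb_eval_tail_odd (by omega) (by omega), diagOf, supDiag]
      rw [Sym2.eq_iff]; simp [Prod.mk.injEq] <;> omega
  · -- inf before sup
    intro c hc i j hi hj hinf hsup
    rcases mem_stair.mp hc with rfl | ⟨j0, hj0, rfl⟩ | ⟨k0, hk0, rfl⟩
    · have e1 := inf_pos_corner hi hinf
      have e2 := sup_pos_corner hj hsup
      omega
    · have e1 := inf_pos_row hi hj0 hinf
      rcases sup_pos_row hj hj0 hsup with ⟨_, e2⟩ | ⟨_, e2⟩ <;> omega
    · have e1 := inf_pos_tail hi hk0 hinf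
      have e2 := sup_pos_tail hj hk0 hsup
      omega
  · exact fun i hi => emb_adj p d hp hd i hi

set_option maxHeartbeats 1000000 in
lemma step_v3 {p d : ℕ} (hp : 2 ≤ p) (hd : 2 ≤ d) {y : ℤ × ℤ} (hy : y ∈ stairLanding 1 p d)
    {E : Sym2 (ℤ × ℤ)} (hE : E = infDiag y ∨ E = supDiag y)
    {w : ℤ × ℤ} (hadj : Adj ((p:ℤ)+(d:ℤ)+1, -1-(d:ℤ)) w) (hw : w ∈ E) :
    (E = infDiag y ∧ (y = ((p:ℤ)+(d:ℤ), -1-(d:ℤ)))) ∨ (E = supDiag y ∧ (False)) := by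
  obtain ⟨w1, w2⟩ := w
  obtain ⟨y1, y2⟩ := y
  have hm := mem_stair_lin hy
  have hc := adj_cases hadj
  simp only at hc
  rcases hE with rfl | rfl
  · left
    refine ⟨rfl, ?_⟩
    simp only [infDiag, Sym2.mem_iff, Prod.mk.injEq] at hw
    try simp only [Prod.mk.injEq]
    rcases hm with ⟨a1, a2⟩ | ⟨a1, a2, a3⟩ | ⟨a1, a2, a3⟩ <;>
      rcases hc with ⟨b1, b2⟩ | ⟨b1, b2⟩ | ⟨b1, b2⟩ | ⟨b1, b2⟩ <;>
      rcases hw with ⟨c1, c2⟩ | ⟨c1, c2⟩ <;>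
      omega
  · right
    refine ⟨rfl, ?_⟩
    simp only [supDiag, Sym2.mem_iff, Prod.mk.injEq] at hw
    try simp only [Prod.mk.injEq]
    rcases hm with ⟨a1, a2⟩ | ⟨a1, a2, a3⟩ | ⟨a1, a2, a3⟩ <;>
      rcases hc with ⟨b1, b2⟩ | ⟨b1, b2⟩ | ⟨b1, b2⟩ | ⟨b1, b2⟩ <;>
      rcases hw with ⟨c1, c2⟩ | ⟨c1, c2⟩ <;>
      omega

set_option maxHeartbeats 1000000 in
lemma step_v4 {p d : ℕ} (hp : 2 ≤ p) (hd : 2 ≤ d) {y : ℤ × ℤ} (hy : y ∈ stairLanding 1 p d)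
    {E : Sym2 (ℤ × ℤ)} (hE : E = infDiag y ∨ E = supDiag y)
    {w : ℤ × ℤ} (hadj : Adj ((p:ℤ)+(d:ℤ), -(d:ℤ)) w) (hw : w ∈ E) :
    (E = infDiag y ∧ (y = ((p:ℤ)+(d:ℤ), -1-(d:ℤ)) ∨ y = ((p:ℤ)+(d:ℤ)-1, -(d:ℤ)))) ∨ (E = supDiag y ∧ (False)) := by
  obtain ⟨w1, w2⟩ := w
  obtain ⟨y1, y2⟩ := y
  have hm := mem_stair_lin hy
  have hc := adj_cases hadj
  simp only at hc
  rcases hE with rfl | rfl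
  · left
    refine ⟨rfl, ?_⟩
    simp only [infDiag, Sym2.mem_iff, Prod.mk.injEq] at hw
    try simp only [Prod.mk.injEq]
    rcases hm with ⟨a1, a2⟩ | ⟨a1, a2, a3⟩ | ⟨a1, a2, a3⟩ <;>
      rcases hc with ⟨b1, b2⟩ | ⟨b1, b2⟩ | ⟨b1, b2⟩ | ⟨b1, b2⟩ <;>
      rcases hw with ⟨c1, c2⟩ | ⟨c1, c2⟩ <;>
      omega
  · right
    refine ⟨rfl, ?_⟩
    simp only [supDiag, Sym2.mem_iff, Prod.mk.injEq] at hw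
    try simp only [Prod.mk.injEq]
    rcases hm with ⟨a1, a2⟩ | ⟨a1, a2, a3⟩ | ⟨a1, a2, a3⟩ <;>
      rcases hc with ⟨b1, b2⟩ | ⟨b1, b2⟩ | ⟨b1, b2⟩ | ⟨b1, b2⟩ <;>
      rcases hw with ⟨c1, c2⟩ | ⟨c1, c2⟩ <;>
      omega

set_option maxHeartbeats 1000000 in
lemma step_v1 {p d : ℕ} (hp : 2 ≤ p) (hd : 2 ≤ d) {y : ℤ × ℤ} (hy : y ∈ stairLanding 1 p d)
    {E : Sym2 (ℤ × ℤ)} (hE : E = infDiag y ∨ E = supDiag y)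
    {w : ℤ × ℤ} (hadj : Adj ((p:ℤ)+(d:ℤ), -1-(d:ℤ)) w) (hw : w ∈ E) :
    (E = infDiag y ∧ (False)) ∨ (E = supDiag y ∧ (y = ((p:ℤ)+(d:ℤ), -1-(d:ℤ)) ∨ y = ((p:ℤ)+(d:ℤ)-1, -(d:ℤ)))) := by
  obtain ⟨w1, w2⟩ := w
  obtain ⟨y1, y2⟩ := y
  have hm := mem_stair_lin hy
  have hc := adj_cases hadj
  simp only at hc
  rcases hE with rfl | rfl
  · left
    refine ⟨rfl, ?_⟩
    simp only [infDiag, Sym2.mem_iff, Prod.mk.injEq] at hw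
    try simp only [Prod.mk.injEq]
    rcases hm with ⟨a1, a2⟩ | ⟨a1, a2, a3⟩ | ⟨a1, a2, a3⟩ <;>
      rcases hc with ⟨b1, b2⟩ | ⟨b1, b2⟩ | ⟨b1, b2⟩ | ⟨b1, b2⟩ <;>
      rcases hw with ⟨c1, c2⟩ | ⟨c1, c2⟩ <;>
      omega
  · right
    refine ⟨rfl, ?_⟩
    simp only [supDiag, Sym2.mem_iff, Prod.mk.injEq] at hw
    try simp only [Prod.mk.injEq]
    rcases hm with ⟨a1, a2⟩ | ⟨a1, a2, a3⟩ | ⟨a1, a2, a3⟩ <;>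
      rcases hc with ⟨b1, b2⟩ | ⟨b1, b2⟩ | ⟨b1, b2⟩ | ⟨b1, b2⟩ <;>
      rcases hw with ⟨c1, c2⟩ | ⟨c1, c2⟩ <;>
      omega

set_option maxHeartbeats 1000000 in
lemma step_v2 {p d : ℕ} (hp : 2 ≤ p) (hd : 2 ≤ d) {y : ℤ × ℤ} (hy : y ∈ stairLanding 1 p d)
    {E : Sym2 (ℤ × ℤ)} (hE : E = infDiag y ∨ E = supDiag y)
    {w : ℤ × ℤ} (hadj : Adj ((p:ℤ)+(d:ℤ)+1, -(d:ℤ)) w) (hw : w ∈ E) :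
    (E = infDiag y ∧ (False)) ∨ (E = supDiag y ∧ (y = ((p:ℤ)+(d:ℤ), -1-(d:ℤ)) ∨ y = ((p:ℤ)+(d:ℤ)-1, -(d:ℤ)))) := by
  obtain ⟨w1, w2⟩ := w
  obtain ⟨y1, y2⟩ := y
  have hm := mem_stair_lin hy
  have hc := adj_cases hadj
  simp only at hc
  rcases hE with rfl | rfl
  · left
    refine ⟨rfl, ?_⟩
    simp only [infDiag, Sym2.mem_iff, Prod.mk.injEq] at hw
    try simp only [Prod.mk.injEq]
    rcases hm with ⟨a1, a2⟩ | ⟨a1, a2, a3⟩ | ⟨a1, a2, a3⟩ <;>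
      rcases hc with ⟨b1, b2⟩ | ⟨b1, b2⟩ | ⟨b1, b2⟩ | ⟨b1, b2⟩ <;>
      rcases hw with ⟨c1, c2⟩ | ⟨c1, c2⟩ <;>
      omega
  · right
    refine ⟨rfl, ?_⟩
    simp only [supDiag, Sym2.mem_iff, Prod.mk.injEq] at hw
    try simp only [Prod.mk.injEq]
    rcases hm with ⟨a1, a2⟩ | ⟨a1, a2, a3⟩ | ⟨a1, a2, a3⟩ <;>
      rcases hc with ⟨b1, b2⟩ | ⟨b1, b2⟩ | ⟨b1, b2⟩ | ⟨b1, b2⟩ <;>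
      rcases hw with ⟨c1, c2⟩ | ⟨c1, c2⟩ <;>
      omega

set_option maxHeartbeats 1000000 in
lemma step_v5 {p d : ℕ} (hp : 2 ≤ p) (hd : 2 ≤ d) {y : ℤ × ℤ} (hy : y ∈ stairLanding 1 p d)
    {E : Sym2 (ℤ × ℤ)} (hE : E = infDiag y ∨ E = supDiag y)
    {w : ℤ × ℤ} (hadj : Adj ((p:ℤ)+(d:ℤ)-1, -(d:ℤ)) w) (hw : w ∈ E) :
    (E = infDiag y ∧ (False)) ∨ (E = supDiag y ∧ (y = ((p:ℤ)+(d:ℤ), -1-(d:ℤ)) ∨ y = ((p:ℤ)+(d:ℤ)-1, -(d:ℤ)) ∨ y = ((p:ℤ)+(d:ℤ)-2, -(d:ℤ)+1))) := by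
  obtain ⟨w1, w2⟩ := w
  obtain ⟨y1, y2⟩ := y
  have hm := mem_stair_lin hy
  have hc := adj_cases hadj
  simp only at hc
  rcases hE with rfl | rfl
  · left
    refine ⟨rfl, ?_⟩
    simp only [infDiag, Sym2.mem_iff, Prod.mk.injEq] at hw
    try simp only [Prod.mk.injEq]
    rcases hm with ⟨a1, a2⟩ | ⟨a1, a2, a3⟩ | ⟨a1, a2, a3⟩ <;>
      rcases hc with ⟨b1, b2⟩ | ⟨b1, b2⟩ | ⟨b1, b2⟩ | ⟨b1, b2⟩ <;>
      rcases hw with ⟨c1, c2⟩ | ⟨c1, c2⟩ <;>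
      omega
  · right
    refine ⟨rfl, ?_⟩
    simp only [supDiag, Sym2.mem_iff, Prod.mk.injEq] at hw
    try simp only [Prod.mk.injEq]
    rcases hm with ⟨a1, a2⟩ | ⟨a1, a2, a3⟩ | ⟨a1, a2, a3⟩ <;>
      rcases hc with ⟨b1, b2⟩ | ⟨b1, b2⟩ | ⟨b1, b2⟩ | ⟨b1, b2⟩ <;>
      rcases hw with ⟨c1, c2⟩ | ⟨c1, c2⟩ <;>
      omega

set_option maxHeartbeats 1000000 in
lemma step_v6 {p d : ℕ} (hp : 2 ≤ p) (hd : 2 ≤ d) {y : ℤ × ℤ} (hy : y ∈ stairLanding 1 p d)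
    {E : Sym2 (ℤ × ℤ)} (hE : E = infDiag y ∨ E = supDiag y)
    {w : ℤ × ℤ} (hadj : Adj ((p:ℤ)+(d:ℤ), -(d:ℤ)+1) w) (hw : w ∈ E) :
    (E = infDiag y ∧ (False)) ∨ (E = supDiag y ∧ (y = ((p:ℤ)+(d:ℤ), -1-(d:ℤ)) ∨ y = ((p:ℤ)+(d:ℤ)-1, -(d:ℤ)) ∨ y = ((p:ℤ)+(d:ℤ)-2, -(d:ℤ)+1))) := by
  obtain ⟨w1, w2⟩ := w
  obtain ⟨y1, y2⟩ := y
  have hm := mem_stair_lin hy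
  have hc := adj_cases hadj
  simp only at hc
  rcases hE with rfl | rfl
  · left
    refine ⟨rfl, ?_⟩
    simp only [infDiag, Sym2.mem_iff, Prod.mk.injEq] at hw
    try simp only [Prod.mk.injEq]
    rcases hm with ⟨a1, a2⟩ | ⟨a1, a2, a3⟩ | ⟨a1, a2, a3⟩ <;>
      rcases hc with ⟨b1, b2⟩ | ⟨b1, b2⟩ | ⟨b1, b2⟩ | ⟨b1, b2⟩ <;>
      rcases hw with ⟨c1, c2⟩ | ⟨c1, c2⟩ <;>
      omega
  · right
    refine ⟨rfl, ?_⟩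
    simp only [supDiag, Sym2.mem_iff, Prod.mk.injEq] at hw
    try simp only [Prod.mk.injEq]
    rcases hm with ⟨a1, a2⟩ | ⟨a1, a2, a3⟩ | ⟨a1, a2, a3⟩ <;>
      rcases hc with ⟨b1, b2⟩ | ⟨b1, b2⟩ | ⟨b1, b2⟩ | ⟨b1, b2⟩ <;>
      rcases hw with ⟨c1, c2⟩ | ⟨c1, c2⟩ <;>
      omega

set_option maxHeartbeats 1600000 in
theorem stair_not_strong (p d : ℕ) (hp : 2 ≤ p) (hd : 2 ≤ d) :
    ¬ StronglyBrodable (stairLanding 1 p d) := by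
  rintro ⟨f, ⟨hE1, hE2, hE3, hE4, hE5⟩, hwrap⟩
  have hcard := card_stair p d
  rw [hcard] at hE1 hE2 hE3 hE4 hE5 hwrap
  set m := 2*(1+p+d) with hm
  -- the three cells at the end of the staircase
  have hA : ((p:ℤ)+(d:ℤ), -1-(d:ℤ)) ∈ stairLanding 1 p d :=
    mem_stair.mpr (Or.inr (Or.inr ⟨d-1, by omega, by simp [Prod.ext_iff] <;> omega⟩))
  have hB : ((p:ℤ)+(d:ℤ)-1, -(d:ℤ)) ∈ stairLanding 1 p d :=
    mem_stair.mpr (Or.inr (Or.inr ⟨d-2, by omega, by simp [Prod.ext_iff] <;> omega⟩))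
  have hCc : ((p:ℤ)+(d:ℤ)-2, -(d:ℤ)+1) ∈ stairLanding 1 p d := by
    rcases (by omega : d = 2 ∨ 3 ≤ d) with h | h
    · exact mem_stair.mpr (Or.inr (Or.inl ⟨p-1, by omega,
        by simp [Prod.ext_iff] <;> omega⟩))
    · exact mem_stair.mpr (Or.inr (Or.inr ⟨d-3, by omega,
        by simp [Prod.ext_iff] <;> omega⟩))
  -- normalization of vertex coordinates
  have en1 : (((p:ℤ)+(d:ℤ), -1-(d:ℤ)+1) : ℤ × ℤ) = ((p:ℤ)+(d:ℤ), -(d:ℤ)) := by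
    simp [Prod.ext_iff] <;> omega
  have en2 : (((p:ℤ)+(d:ℤ)+1, -1-(d:ℤ)+1) : ℤ × ℤ) = ((p:ℤ)+(d:ℤ)+1, -(d:ℤ)) := by
    simp [Prod.ext_iff] <;> omega
  have en3 : (((p:ℤ)+(d:ℤ)-1+1, -(d:ℤ)+1) : ℤ × ℤ) = ((p:ℤ)+(d:ℤ), -(d:ℤ)+1) := by
    simp [Prod.ext_iff] <;> omega
  have hmemL : ∀ t : ℕ, (f t).1 ∈ diagOf (f t) := fun t => by
    rw [diagOf]; exact Sym2.mem_mk_left _ _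
  have hmemR : ∀ t : ℕ, (f t).2 ∈ diagOf (f t) := fun t => by
    rw [diagOf]; exact Sym2.mem_mk_right _ _
  -- distinctness of the three cells (as coordinate facts used via omega later)
  obtain ⟨iA, ⟨hiAlt, hiA⟩, hiAu⟩ := hE2 _ hA
  obtain ⟨jA, ⟨hjAlt, hjA⟩, hjAu⟩ := hE3 _ hA
  obtain ⟨jB, ⟨hjBlt, hjB⟩, hjBu⟩ := hE3 _ hB
  have hij : iA < jA := hE4 _ hA iA jA hiAlt hjAlt hiA hjA
  -- orientation of the supA stitch
  have horA := hjA
  rw [diagOf, supDiag] at horA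
  rw [Sym2.eq_iff] at horA
  simp only at horA
  -- orientation of the infA stitch
  have horI := hiA
  rw [diagOf, infDiag] at horI
  rw [Sym2.eq_iff] at horI
  simp only at horI
  rcases horA with ⟨h1, h2⟩ | ⟨h1, h2⟩
  · -- case α : the supA stitch ends at v3
    rcases (by omega : jA + 1 < m ∨ jA = m - 1) with hj1 | hj1
    · have hadj := hE5 jA hj1
      rw [h2] at hadj
      obtain ⟨y, hy, hDy⟩ := hE1 (jA+1) (by omega)
      rcases step_v3 hp hd hy hDy hadj (hmemL (jA+1)) with ⟨hEinf, hyA⟩ | ⟨_, hF⟩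
      · have : jA + 1 = iA := hiAu _ ⟨by omega, by rw [hEinf, hyA]⟩
        omega
      · exact hF
    · have hadj := hwrap
      rw [show m - 1 = jA by omega, h2] at hadj
      obtain ⟨y, hy, hDy⟩ := hE1 0 (by omega)
      rcases step_v3 hp hd hy hDy hadj (hmemL 0) with ⟨hEinf, hyA⟩ | ⟨_, hF⟩
      swap
      · exact hF
      have h0iA : (0:ℕ) = iA := hiAu _ ⟨by omega, by rw [hEinf, hyA]⟩
      -- predecessor of the supA stitch
      have hadj2 := hE5 (m-2) (by omega)
      rw [show m-2+1 = jA by omega, h1, en1] at hadj2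
      have hadj2' := adj_symm hadj2
      obtain ⟨y2, hy2, hDy2⟩ := hE1 (m-2) (by omega)
      rcases step_v4 hp hd hy2 hDy2 hadj2' (hmemR (m-2)) with ⟨hEinf2, hyAB⟩ | ⟨_, hF⟩
      swap
      · exact hF
      rcases hyAB with hyA2 | hyB2
      · have : m - 2 = iA := hiAu _ ⟨by omega, by rw [hEinf2, hyA2]⟩
        omega
      · have hordB := hE4 _ hB (m-2) jB (by omega) hjBlt (by rw [hEinf2, hyB2]) hjB
        have hjBm : jB = m-1 := by omega
        have e1 : diagOf (f jA) = supDiag ((p:ℤ)+(d:ℤ)-1, -(d:ℤ)) := by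
          rw [hj1, ← hjBm]; exact hjB
        have := supDiag_inj (e1.symm.trans hjA)
        simp [Prod.ext_iff] at this <;> omega
  · -- case β : the supA stitch starts at v3 and ends at v4
    -- predecessor of the supA stitch is the infA stitch
    have hadj := hE5 (jA-1) (by omega)
    rw [show jA-1+1 = jA by omega, h1] at hadj
    have hadj' := adj_symm hadj
    obtain ⟨y, hy, hDy⟩ := hE1 (jA-1) (by omega)
    rcases step_v3 hp hd hy hDy hadj' (hmemR (jA-1)) with ⟨hEinf, hyA⟩ | ⟨_, hF⟩
    swap
    · exact hF
    have hpred : jA - 1 = iA := hiAu _ ⟨by omega, by rw [hEinf, hyA]⟩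
    -- successor of the supA stitch is the infB stitch
    obtain ⟨s1, hs1lt, hs1spec, hadjs⟩ :
        ∃ s1, s1 < m ∧ ((jA + 1 < m ∧ s1 = jA+1) ∨ (jA = m-1 ∧ s1 = 0)) ∧
          Adj ((p:ℤ)+(d:ℤ), -(d:ℤ)) ((f s1).1) := by
      rcases (by omega : jA + 1 < m ∨ jA = m-1) with hj1 | hj1
      · refine ⟨jA+1, by omega, Or.inl ⟨hj1, rfl⟩, ?_⟩
        have h := hE5 jA hj1
        rw [h2, en1] at h
        exact h
      · refine ⟨0, by omega, Or.inr ⟨hj1, rfl⟩, ?_⟩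
        have h := hwrap
        rw [show m - 1 = jA by omega, h2, en1] at h
        exact h
    obtain ⟨y4, hy4, hDy4⟩ := hE1 s1 hs1lt
    rcases step_v4 hp hd hy4 hDy4 hadjs (hmemL s1) with ⟨hEinf4, hyAB⟩ | ⟨_, hF⟩
    swap
    · exact hF
    rcases hyAB with hyA4 | hyB4
    · have : s1 = iA := hiAu _ ⟨by omega, by rw [hEinf4, hyA4]⟩
      rcases hs1spec with ⟨h5, h6⟩ | ⟨h5, h6⟩ <;> omega
    have hinfB : diagOf (f s1) = infDiag ((p:ℤ)+(d:ℤ)-1, -(d:ℤ)) := by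
      rw [hEinf4, hyB4]
    -- predecessor of the infA stitch is the supB stitch
    obtain ⟨q, hqlt, hqspec, hadjq⟩ :
        ∃ q, q < m ∧ ((1 ≤ iA ∧ q = iA-1) ∨ (iA = 0 ∧ q = m-1)) ∧
          Adj ((f q).2) ((f iA).1) := by
      rcases (by omega : 1 ≤ iA ∨ iA = 0) with h | h
      · refine ⟨iA-1, by omega, Or.inl ⟨h, rfl⟩, ?_⟩
        have h' := hE5 (iA-1) (by omega)
        rwa [show iA-1+1 = iA by omega] at h'
      · refine ⟨m-1, by omega, Or.inr ⟨h, rfl⟩, ?_⟩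
        rw [h]
        exact hwrap
    obtain ⟨y5, hy5, hDy5⟩ := hE1 q hqlt
    have hsupB : diagOf (f q) = supDiag ((p:ℤ)+(d:ℤ)-1, -(d:ℤ)) := by
      rcases horI with ⟨g1, g2⟩ | ⟨g1, g2⟩
      · rw [g1] at hadjq
        have hadjq' := adj_symm hadjq
        rcases step_v1 hp hd hy5 hDy5 hadjq' (hmemR q) with ⟨_, hF⟩ | ⟨hEsup5, hyAB5⟩
        · exact hF.elim
        rcases hyAB5 with hyA5 | hyB5
        · have : q = jA := hjAu _ ⟨by omega, by rw [hEsup5, hyA5]⟩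
          rcases hqspec with ⟨h5, h6⟩ | ⟨h5, h6⟩ <;> omega
        · rw [hEsup5, hyB5]
      · rw [g1, en2] at hadjq
        have hadjq' := adj_symm hadjq
        rcases step_v2 hp hd hy5 hDy5 hadjq' (hmemR q) with ⟨_, hF⟩ | ⟨hEsup5, hyAB5⟩
        · exact hF.elim
        rcases hyAB5 with hyA5 | hyB5
        · have : q = jA := hjAu _ ⟨by omega, by rw [hEsup5, hyA5]⟩
          rcases hqspec with ⟨h5, h6⟩ | ⟨h5, h6⟩ <;> omega
        · rw [hEsup5, hyB5]
    have hqjB : q = jB := hjBu _ ⟨by omega, hsupB⟩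
    have hordB : s1 < jB := hE4 _ hB s1 jB hs1lt hjBlt hinfB hjB
    -- case analysis on the wrap positions
    rcases hs1spec with ⟨h5, h6⟩ | ⟨h5, h6⟩ <;> rcases hqspec with ⟨h7, h8⟩ | ⟨h7, h8⟩
    · -- no wrap at all : contradiction
      omega
    · -- iA = 0, jA = 1, infB at 2, supB at m-1
      have hiA0 : iA = 0 := h7
      have hjA1 : jA = 1 := by omega
      have hs12 : s1 = 2 := by omega
      have hjBm : jB = m-1 := by omega
      -- successor of the infB stitch must be supC, forcing infC before position 3
      have horB := hinfB
      rw [diagOf, infDiag] at horB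
      rw [Sym2.eq_iff] at horB
      simp only at horB
      have hadj7 := hE5 2 (by omega)
      rw [← hs12] at hadj7
      obtain ⟨y7, hy7, hDy7⟩ := hE1 3 (by omega)
      have hsup7 : diagOf (f 3) = supDiag ((p:ℤ)+(d:ℤ), -1-(d:ℤ)) ∨
          diagOf (f 3) = supDiag ((p:ℤ)+(d:ℤ)-1, -(d:ℤ)) ∨
          diagOf (f 3) = supDiag ((p:ℤ)+(d:ℤ)-2, -(d:ℤ)+1) := by
        rcases horB with ⟨g1, g2⟩ | ⟨g1, g2⟩
        · rw [g2, en3] at hadj7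
          rw [hs12, show (2:ℕ)+1 = 3 by omega] at hadj7
          rcases step_v6 hp hd hy7 hDy7 hadj7 (hmemL 3) with ⟨_, hF⟩ | ⟨hEsup7, hh⟩
          · exact hF.elim
          rcases hh with h | h | h
          · exact Or.inl (by rw [hEsup7, h])
          · exact Or.inr (Or.inl (by rw [hEsup7, h]))
          · exact Or.inr (Or.inr (by rw [hEsup7, h]))
        · rw [g2] at hadj7
          rw [hs12, show (2:ℕ)+1 = 3 by omega] at hadj7
          rcases step_v5 hp hd hy7 hDy7 hadj7 (hmemL 3) with ⟨_, hF⟩ | ⟨hEsup7, hh⟩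
          · exact hF.elim
          rcases hh with h | h | h
          · exact Or.inl (by rw [hEsup7, h])
          · exact Or.inr (Or.inl (by rw [hEsup7, h]))
          · exact Or.inr (Or.inr (by rw [hEsup7, h]))
      rcases hsup7 with h | h | h
      · have : (3:ℕ) = jA := hjAu _ ⟨by omega, h⟩
        omega
      · have : (3:ℕ) = jB := hjBu _ ⟨by omega, h⟩
        omega
      · obtain ⟨iC, ⟨hiClt, hiC⟩, _⟩ := hE2 _ hCc
        have hiC3 : iC < 3 := hE4 _ hCc iC 3 hiClt (by omega) hiC h
        rcases (by omega : iC = 0 ∨ iC = 1 ∨ iC = 2) with hc0 | hc0 | hc0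
        · rw [hc0] at hiC
          have e := hiA
          rw [hiA0] at e
          have := infDiag_inj (e.symm.trans hiC)
          simp [Prod.ext_iff] at this <;> omega
        · rw [hc0] at hiC
          have e := hjA
          rw [hjA1] at e
          exact infDiag_ne_supDiag (hiC.symm.trans e)
        · rw [hc0] at hiC
          have e := hinfB
          rw [hs12] at e
          have := infDiag_inj (e.symm.trans hiC)
          simp [Prod.ext_iff] at this <;> omega
    · -- jA = m-1, iA = m-2, infB at 0, supB at m-3
      have hjAm : jA = m-1 := h5
      have hiAm : iA = m-2 := by omega
      have hs10 : s1 = 0 := h6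
      have hjBm : jB = m-3 := by omega
      have horB := hinfB
      rw [diagOf, infDiag] at horB
      rw [Sym2.eq_iff] at horB
      simp only at horB
      have hadj7 := hE5 0 (by omega)
      rw [← hs10] at hadj7
      obtain ⟨y7, hy7, hDy7⟩ := hE1 1 (by omega)
      have hsup7 : diagOf (f 1) = supDiag ((p:ℤ)+(d:ℤ), -1-(d:ℤ)) ∨
          diagOf (f 1) = supDiag ((p:ℤ)+(d:ℤ)-1, -(d:ℤ)) ∨
          diagOf (f 1) = supDiag ((p:ℤ)+(d:ℤ)-2, -(d:ℤ)+1) := by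
        rcases horB with ⟨g1, g2⟩ | ⟨g1, g2⟩
        · rw [g2, en3] at hadj7
          rw [hs10, show (0:ℕ)+1 = 1 by omega] at hadj7
          rcases step_v6 hp hd hy7 hDy7 hadj7 (hmemL 1) with ⟨_, hF⟩ | ⟨hEsup7, hh⟩
          · exact hF.elim
          rcases hh with h | h | h
          · exact Or.inl (by rw [hEsup7, h])
          · exact Or.inr (Or.inl (by rw [hEsup7, h]))
          · exact Or.inr (Or.inr (by rw [hEsup7, h]))
        · rw [g2] at hadj7
          rw [hs10, show (0:ℕ)+1 = 1 by omega] at hadj7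
          rcases step_v5 hp hd hy7 hDy7 hadj7 (hmemL 1) with ⟨_, hF⟩ | ⟨hEsup7, hh⟩
          · exact hF.elim
          rcases hh with h | h | h
          · exact Or.inl (by rw [hEsup7, h])
          · exact Or.inr (Or.inl (by rw [hEsup7, h]))
          · exact Or.inr (Or.inr (by rw [hEsup7, h]))
      rcases hsup7 with h | h | h
      · have : (1:ℕ) = jA := hjAu _ ⟨by omega, h⟩
        omega
      · have : (1:ℕ) = jB := hjBu _ ⟨by omega, h⟩
        omega
      · obtain ⟨iC, ⟨hiClt, hiC⟩, _⟩ := hE2 _ hCc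
        have hiC1 : iC < 1 := hE4 _ hCc iC 1 hiClt (by omega) hiC h
        have hc0 : iC = 0 := by omega
        rw [hc0] at hiC
        have e := hinfB
        rw [hs10] at e
        have := infDiag_inj (e.symm.trans hiC)
        simp [Prod.ext_iff] at this <;> omega
    · omega

/-- For `d ≥ 2` and `p ≥ 2`, the staircase with landing `E_{1,p,d}` is brodable but
not strongly brodable. -/
theorem stairLanding_one_p_d (p d : ℕ) (hp : 2 ≤ p) (hd : 2 ≤ d) :
    Brodable (stairLanding 1 p d) ∧ ¬ StronglyBrodable (stairLanding 1 p d) := by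
  exact ⟨⟨emb p d, emb_isEmbroidery p d hp hd⟩, stair_not_strong p d hp hd⟩
end

section
/- The configuration {(0,0),(2,0)}, consisting of two cells in the same row separated by one empty cell, is strongly brodable, although it is not 8-connected. -/
/-- Two cells are 8-adjacent if they are distinct and differ by `(ε, δ)` with
`ε, δ ∈ {-1, 0, 1}`. -/
def EightAdj (p q : ℤ × ℤ) : Prop :=
  p ≠ q ∧ |p.1 - q.1| ≤ 1 ∧ |p.2 - q.2| ≤ 1

/-- A configuration is 8-connected if any two of its cells are joined by a chain of
cells of the configuration in which consecutive cells are 8-adjacent. -/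
def EightConnected (C : Finset (ℤ × ℤ)) : Prop :=
  ∀ p ∈ C, ∀ q ∈ C,
    Relation.ReflTransGen (fun a b => a ∈ C ∧ b ∈ C ∧ EightAdj a b) p q

def dWitness : ℕ → (ℤ × ℤ) × (ℤ × ℤ)
  | 0 => ((1, 1), (0, 0))
  | 1 => ((0, 1), (1, 0))
  | 2 => ((2, 0), (3, 1))
  | _ => ((3, 0), (2, 1))

/-- The configuration `{(0,0), (2,0)}` is strongly brodable although not 8-connected. -/
theorem two_separated_cells :
    StronglyBrodable ({((0 : ℤ), (0 : ℤ)), ((2 : ℤ), (0 : ℤ))} : Finset (ℤ × ℤ)) ∧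
    ¬ EightConnected ({((0 : ℤ), (0 : ℤ)), ((2 : ℤ), (0 : ℤ))} : Finset (ℤ × ℤ)) := by
  set C : Finset (ℤ × ℤ) := {((0 : ℤ), (0 : ℤ)), ((2 : ℤ), (0 : ℤ))} with hC
  have hcard : C.card = 2 := by decide
  constructor
  · refine ⟨dWitness, ⟨⟨?_, ?_, ?_, ?_, ?_⟩, ?_⟩⟩
    · intro i hi
      rw [hcard] at hi
      interval_cases i
      · exact ⟨((0:ℤ),(0:ℤ)), by decide, Or.inl (by decide)⟩
      · exact ⟨((0:ℤ),(0:ℤ)), by decide, Or.inr (by decide)⟩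
      · exact ⟨((2:ℤ),(0:ℤ)), by decide, Or.inl (by decide)⟩
      · exact ⟨((2:ℤ),(0:ℤ)), by decide, Or.inr (by decide)⟩
    · intro c hc
      rw [hcard]
      fin_cases hc
      · refine ⟨0, ⟨by norm_num, by decide⟩, ?_⟩
        rintro j ⟨hj, hdj⟩
        interval_cases j <;> first | rfl | (exfalso; revert hdj; decide)
      · refine ⟨2, ⟨by norm_num, by decide⟩, ?_⟩
        rintro j ⟨hj, hdj⟩
        interval_cases j <;> first | rfl | (exfalso; revert hdj; decide)
    · intro c hc
      rw [hcard]
      fin_cases hc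
      · refine ⟨1, ⟨by norm_num, by decide⟩, ?_⟩
        rintro j ⟨hj, hdj⟩
        interval_cases j <;> first | rfl | (exfalso; revert hdj; decide)
      · refine ⟨3, ⟨by norm_num, by decide⟩, ?_⟩
        rintro j ⟨hj, hdj⟩
        interval_cases j <;> first | rfl | (exfalso; revert hdj; decide)
    · intro c hc i j hi hj hinf hsup
      rw [hcard] at hi hj
      fin_cases hc <;> interval_cases i <;> interval_cases j <;>
        (revert hinf hsup; decide)
    · intro i hi
      rw [hcard] at hi
      have hi3 : i < 3 := by omega
      interval_cases i <;> norm_num [Adj, dWitness]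
    · rw [hcard]
      norm_num [Adj, dWitness]
  · intro h
    have h2 := h ((0:ℤ),(0:ℤ)) (by decide) ((2:ℤ),(0:ℤ)) (by decide)
    have key : ∀ x : ℤ × ℤ,
        Relation.ReflTransGen (fun a b => a ∈ C ∧ b ∈ C ∧ EightAdj a b)
          ((0:ℤ),(0:ℤ)) x → x = ((0:ℤ),(0:ℤ)) := by
      intro x hx
      induction hx with
      | refl => rfl
      | tail _ hr ih =>
        rename_i b c _
        obtain ⟨hb, hcC, hne, h1, _⟩ := hr
        subst ih
        have : c ∈ C := hcC
        rw [hC] at this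
        simp only [Finset.mem_insert, Finset.mem_singleton] at this
        rcases this with rfl | rfl
        · exact absurd rfl hne
        · norm_num at h1
    exact absurd (key _ h2) (by decide)
end
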